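/- arXiv:2604.17654 — 2 statements merged into one kernel-verified Lean document; each statement's English description precedes it below -/
import Mathlib

section
/- Let Y be a finite type, π a probability mass function on Y, and f : Y^n → ℝ a function symmetric in its arguments. Suppose y₁,…,y_N are i.i.d. samples from π with N > n. Define the set score f(G) for each n-subset G of {1,…,N}, the baseline b = (1/C(N,n)) Σ over all n-subsets f(G), and for each index i the marginal advantage A(i) = Σ_{G ∋ i} (f(G) − b). Then E[Σ_{i=1}^N ∇log π(y_i) · A(i)] = (C(N,n) − C(N−1,n−1)) · E[f(Y₁,…,Y_n) · Σ_{j=1}^n ∇log π(Y_j)] where Y₁,…,Y_n are i.i.d. from π. (One may state this coordinatewise for a parametrized family of pmfs, or with ∇log π replaced by an arbitrary function g : Y → ℝ with E_π[g] = 0.) -/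
open Finset

section SetRLAux
variable {Y : Type*} [Fintype Y]
set_option linter.unusedSectionVars false

lemma multiset_map_univ_equiv {A B : Type*} [Fintype A] [Fintype B] (e : A ≃ B) (w : A → Y) :
    (Finset.univ : Finset B).val.map (fun b => w (e.symm b))
      = (Finset.univ : Finset A).val.map w := by
  have h : (Finset.univ : Finset B).val.map ⇑e.symm = (Finset.univ : Finset A).val := by
    have h2 := Finset.map_univ_equiv e.symm
    calc (Finset.univ : Finset B).val.map ⇑e.symm
        = ((Finset.univ : Finset B).map e.symm.toEmbedding).val := rfl
      _ = (Finset.univ : Finset A).val := by rw [h2]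
  calc (Finset.univ : Finset B).val.map (fun b => w (e.symm b))
      = ((Finset.univ : Finset B).val.map ⇑e.symm).map w := by
        rw [Multiset.map_map]; rfl
    _ = (Finset.univ : Finset A).val.map w := by rw [h]

/-- the one-coordinate set-RL integral -/
noncomputable def Tv (π g : Y → ℝ) (f : Multiset Y → ℝ) (A : Type*) [Fintype A] [DecidableEq A]
    (k : A) : ℝ :=
  ∑ w : A → Y, (∏ j, π (w j)) * (f ((Finset.univ : Finset A).val.map w) * g (w k))

lemma Tv_reindex (π g : Y → ℝ) (f : Multiset Y → ℝ) {A B : Type*} [Fintype A] [Fintype B]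
    [DecidableEq A] [DecidableEq B]
    (e : A ≃ B) (a : A) : Tv π g f B (e a) = Tv π g f A a := by
  unfold Tv
  refine (Fintype.sum_equiv (Equiv.piCongrLeft' (fun _ => Y) e) _ _ ?_).symm
  intro w
  have h1 : ∀ b : B, (Equiv.piCongrLeft' (fun _ => Y) e) w b = w (e.symm b) := fun b => rfl
  simp only [h1, Equiv.symm_apply_apply]
  rw [Equiv.prod_comp e.symm (fun j => π (w j)), multiset_map_univ_equiv e w]

lemma Tv_const (π g : Y → ℝ) (f : Multiset Y → ℝ) {A : Type*} [Fintype A] [DecidableEq A]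
    (k k' : A) : Tv π g f A k = Tv π g f A k' := by
  have := Tv_reindex π g f (Equiv.swap k k') k
  simpa [Equiv.swap_apply_left] using this.symm

lemma sum_weight_one (π : Y → ℝ) (hπ1 : ∑ y, π y = 1) (B : Type*) [Fintype B] [DecidableEq B] :
    ∑ b : B → Y, ∏ j, π (b j) = 1 := by
  rw [← Fintype.piFinset_univ, ← Finset.prod_univ_sum]
  simp [hπ1]

lemma sum_weight_g (π g : Y → ℝ) (hπ1 : ∑ y, π y = 1) (hg : ∑ y, π y * g y = 0)
    {B : Type*} [Fintype B] [DecidableEq B] (k : B) :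
    ∑ b : B → Y, (∏ j, π (b j)) * g (b k) = 0 := by
  have hsplit : ∀ b : B → Y, ∏ j, π (b j)
      = π (b k) * ∏ j : {j : B // j ≠ k}, π (b j.1) := by
    intro b
    rw [← Finset.mul_prod_erase Finset.univ (fun j => π (b j)) (Finset.mem_univ k)]
    congr 1
    exact (Finset.prod_subtype (p := fun j => j ≠ k) (Finset.univ.erase k) (by simp)
      (fun j => π (b j)))
  calc ∑ b : B → Y, (∏ j, π (b j)) * g (b k)
      = ∑ p : Y × ({j : B // j ≠ k} → Y),
          (π p.1 * ∏ j : {j : B // j ≠ k}, π (p.2 j)) * g p.1 := by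
        refine Fintype.sum_equiv (Equiv.funSplitAt k Y) _ _ ?_
        intro b
        rw [hsplit b]; rfl
    _ = (∑ v : Y, π v * g v) * ∑ r : {j : B // j ≠ k} → Y, ∏ j, π (r j) := by
        rw [Fintype.sum_prod_type, Finset.sum_mul]
        refine Finset.sum_congr rfl fun v _ => ?_
        rw [Finset.mul_sum]
        exact Finset.sum_congr rfl fun r _ => by ring
    _ = 0 := by rw [hg, zero_mul]

lemma multiset_map_restrict {N : ℕ} (G : Finset (Fin N)) (y : Fin N → Y) :
    G.val.map y = (Finset.univ : Finset {x // x ∈ G}).val.map (fun x => y x.1) := by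
  rw [Finset.univ_eq_attach]
  calc G.val.map y = (G.attach.val.map Subtype.val).map y := by
        rw [Finset.attach_val, Multiset.attach_map_val]
    _ = G.attach.val.map (fun x => y x.1) := by rw [Multiset.map_map]; rfl

lemma E_eq {N : ℕ} (n : ℕ) (hn : 1 ≤ n) (π g : Y → ℝ)
    (hπ1 : ∑ y, π y = 1) (hg : ∑ y, π y * g y = 0)
    (f : Multiset Y → ℝ) (i : Fin N) (G : Finset (Fin N)) (hG : G.card = n) :
    ∑ y : Fin N → Y, (∏ j, π (y j)) * (g (y i) * f (G.val.map y))
      = if i ∈ G then Tv π g f (Fin n) ⟨0, hn⟩ else 0 := by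
  classical
  by_cases hi : i ∈ G
  · simp only [hi, if_true]
    have step1 : ∑ y : Fin N → Y, (∏ j, π (y j)) * (g (y i) * f (G.val.map y))
        = ∑ p : ({x // x ∈ G} → Y) × ({x // ¬ x ∈ G} → Y),
            ((∏ j, π (p.1 j)) * (∏ j, π (p.2 j))) *
              (g (p.1 ⟨i, hi⟩) * f ((Finset.univ : Finset {x // x ∈ G}).val.map p.1)) := by
      refine Fintype.sum_equiv (Equiv.piEquivPiSubtypeProd (fun x => x ∈ G) (fun _ => Y)) _ _ ?_
      intro y
      have hmap := multiset_map_restrict G y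
      have hprod := Fintype.prod_subtype_mul_prod_subtype (fun x => x ∈ G) (fun j => π (y j))
      rw [← hprod, hmap]
      congr!
    rw [step1, Fintype.sum_prod_type]
    have step2 : ∀ a : {x // x ∈ G} → Y,
        ∑ b : {x // ¬ x ∈ G} → Y, ((∏ j, π (a j)) * (∏ j, π (b j))) *
            (g (a ⟨i, hi⟩) * f ((Finset.univ : Finset {x // x ∈ G}).val.map a))
          = (∏ j, π (a j)) * (f ((Finset.univ : Finset {x // x ∈ G}).val.map a) * g (a ⟨i, hi⟩)) := by
      intro a
      have : ∑ b : {x // ¬ x ∈ G} → Y, ((∏ j, π (a j)) * (∏ j, π (b j))) *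
            (g (a ⟨i, hi⟩) * f ((Finset.univ : Finset {x // x ∈ G}).val.map a))
          = ((∏ j, π (a j)) * (f ((Finset.univ : Finset {x // x ∈ G}).val.map a) * g (a ⟨i, hi⟩)))
              * ∑ b : {x // ¬ x ∈ G} → Y, ∏ j, π (b j) := by
        rw [Finset.mul_sum]
        exact Finset.sum_congr rfl fun b _ => by ring
      rw [this, sum_weight_one π hπ1, mul_one]
    rw [Finset.sum_congr rfl (fun a _ => step2 a)]
    have heq : (∑ a : {x // x ∈ G} → Y, (∏ j, π (a j)) *
        (f ((Finset.univ : Finset {x // x ∈ G}).val.map a) * g (a ⟨i, hi⟩)))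
        = Tv π g f {x // x ∈ G} ⟨i, hi⟩ := rfl
    rw [heq]
    let e2 : {x // x ∈ G} ≃ Fin n := G.equivFin.trans (finCongr hG)
    rw [← Tv_reindex π g f e2 ⟨i, hi⟩]
    exact Tv_const π g f (e2 ⟨i, hi⟩) ⟨0, hn⟩
  · simp only [hi, if_false]
    have step1 : ∑ y : Fin N → Y, (∏ j, π (y j)) * (g (y i) * f (G.val.map y))
        = ∑ p : ({x // x ∈ G} → Y) × ({x // ¬ x ∈ G} → Y),
            ((∏ j, π (p.1 j)) * (∏ j, π (p.2 j))) *
              (g (p.2 ⟨i, hi⟩) * f ((Finset.univ : Finset {x // x ∈ G}).val.map p.1)) := by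
      refine Fintype.sum_equiv (Equiv.piEquivPiSubtypeProd (fun x => x ∈ G) (fun _ => Y)) _ _ ?_
      intro y
      have hmap := multiset_map_restrict G y
      have hprod := Fintype.prod_subtype_mul_prod_subtype (fun x => x ∈ G) (fun j => π (y j))
      rw [← hprod, hmap]
      congr!
    rw [step1, Fintype.sum_prod_type_right]
    have step2 : ∀ b : {x // ¬ x ∈ G} → Y,
        ∑ a : {x // x ∈ G} → Y, ((∏ j, π (a j)) * (∏ j, π (b j))) *
            (g (b ⟨i, hi⟩) * f ((Finset.univ : Finset {x // x ∈ G}).val.map a))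
          = ((∏ j, π (b j)) * g (b ⟨i, hi⟩)) *
              ∑ a : {x // x ∈ G} → Y, (∏ j, π (a j)) * f ((Finset.univ : Finset {x // x ∈ G}).val.map a) := by
      intro b
      rw [Finset.mul_sum]
      exact Finset.sum_congr rfl fun a _ => by ring
    rw [Finset.sum_congr rfl (fun b _ => step2 b), ← Finset.sum_mul,
      sum_weight_g π g hπ1 hg (B := {x // ¬ x ∈ G}) ⟨i, hi⟩, zero_mul]

end SetRLAux

lemma card_filter_mem_powersetCard {N n : ℕ} (hn : 1 ≤ n) (i : Fin N) :
    (((Finset.powersetCard n (Finset.univ : Finset (Fin N))).filter (fun G => i ∈ G)).card)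
      = (N - 1).choose (n - 1) := by
  classical
  have h : (((Finset.powersetCard n (Finset.univ : Finset (Fin N))).filter (fun G => i ∈ G)).card)
      = (Finset.powersetCard (n-1) ((Finset.univ : Finset (Fin N)).erase i)).card := by
    refine Finset.card_bij' (fun G _ => G.erase i) (fun H _ => insert i H) ?_ ?_ ?_ ?_
    · intro G hG
      simp only [Finset.mem_filter, Finset.mem_powersetCard] at hG
      rw [Finset.mem_powersetCard]
      exact ⟨Finset.erase_subset_erase i hG.1.1, by rw [Finset.card_erase_of_mem hG.2, hG.1.2]⟩
    · intro H hH
      rw [Finset.mem_powersetCard] at hH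
      have hiH : i ∉ H := fun h => (Finset.mem_erase.mp (hH.1 h)).1 rfl
      simp only [Finset.mem_filter, Finset.mem_powersetCard]
      refine ⟨⟨Finset.subset_univ _, ?_⟩, Finset.mem_insert_self i H⟩
      rw [Finset.card_insert_of_notMem hiH, hH.2]
      omega
    · intro G hG
      simp only [Finset.mem_filter] at hG
      exact Finset.insert_erase hG.2
    · intro H hH
      rw [Finset.mem_powersetCard] at hH
      exact Finset.erase_insert (fun h => (Finset.mem_erase.mp (hH.1 h)).1 rfl)
  rw [h, Finset.card_powersetCard, Finset.card_erase_of_mem (Finset.mem_univ i),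
    Finset.card_univ, Fintype.card_fin]

/-- Unbiasedness of the set-RL gradient estimator built from all C(N,n) subsets:
with g playing the role of the score function ∇log π (zero mean under π), the
expected estimator equals (C(N,n) − C(N−1,n−1)) times the true set-RL gradient. -/
theorem stmt_1 {Y : Type*} [Fintype Y] (n N : ℕ) (hn : 1 ≤ n) (hN : n < N)
    (π : Y → ℝ) (hπ0 : ∀ y, 0 ≤ π y) (hπ1 : ∑ y, π y = 1)
    (g : Y → ℝ) (hg : ∑ y, π y * g y = 0)
    (f : Multiset Y → ℝ) :
    (∑ y : Fin N → Y, (∏ i, π (y i)) *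
      (∑ i : Fin N, g (y i) *
        (∑ G ∈ (Finset.powersetCard n (Finset.univ : Finset (Fin N))).filter
            (fun G => i ∈ G),
          (f (G.val.map y)
            - (1 / (N.choose n : ℝ)) *
              ∑ G' ∈ Finset.powersetCard n (Finset.univ : Finset (Fin N)),
                f (G'.val.map y)))))
    = ((N.choose n : ℝ) - ((N - 1).choose (n - 1) : ℝ)) *
        ∑ z : Fin n → Y, (∏ j, π (z j)) *
          (f (Multiset.map z (Finset.univ : Finset (Fin n)).val) * ∑ j : Fin n, g (z j)) := by
  classical
  set P : Finset (Finset (Fin N)) := Finset.powersetCard n (Finset.univ : Finset (Fin N)) with hP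
  set C : ℝ := (N.choose n : ℝ) with hC
  set c : ℝ := ((N - 1).choose (n - 1) : ℝ) with hc
  set T : ℝ := Tv π g f (Fin n) ⟨0, hn⟩ with hT
  have hE : ∀ (i : Fin N), ∀ G ∈ P, ∑ y : Fin N → Y, (∏ j, π (y j)) * (g (y i) * f (G.val.map y))
      = if i ∈ G then T else 0 := by
    intro i G hG
    rw [Finset.mem_powersetCard] at hG
    exact E_eq n hn π g hπ1 hg f i G hG.2
  -- step A: push the expectation inside
  have hA : ∀ (i : Fin N) (G : Finset (Fin N)),
      (∑ y : Fin N → Y, (∏ j, π (y j)) *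
          (g (y i) * (f (G.val.map y) - (1 / C) * ∑ G' ∈ P, f (G'.val.map y))))
        = (∑ y : Fin N → Y, (∏ j, π (y j)) * (g (y i) * f (G.val.map y)))
          - (1 / C) * ∑ G' ∈ P, ∑ y : Fin N → Y, (∏ j, π (y j)) * (g (y i) * f (G'.val.map y)) := by
    intro i G
    have h1 : ∀ y : Fin N → Y, (∏ j, π (y j)) *
          (g (y i) * (f (G.val.map y) - (1 / C) * ∑ G' ∈ P, f (G'.val.map y)))
        = (∏ j, π (y j)) * (g (y i) * f (G.val.map y))
          - (1 / C) * ∑ G' ∈ P, (∏ j, π (y j)) * (g (y i) * f (G'.val.map y)) := by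
      intro y
      have h2 : (∏ j, π (y j)) * (g (y i) * ∑ G' ∈ P, f (G'.val.map y))
          = ∑ G' ∈ P, (∏ j, π (y j)) * (g (y i) * f (G'.val.map y)) := by
        rw [Finset.mul_sum, Finset.mul_sum]
      rw [← h2]
      ring
    rw [Finset.sum_congr rfl (fun y _ => h1 y), Finset.sum_sub_distrib, ← Finset.mul_sum,
      Finset.sum_comm]
  have hLHS : (∑ y : Fin N → Y, (∏ i, π (y i)) *
      (∑ i : Fin N, g (y i) *
        (∑ G ∈ P.filter (fun G => i ∈ G),
          (f (G.val.map y) - (1 / C) * ∑ G' ∈ P, f (G'.val.map y)))))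
      = ∑ i : Fin N, ∑ G ∈ P.filter (fun G => i ∈ G),
          ((∑ y : Fin N → Y, (∏ j, π (y j)) * (g (y i) * f (G.val.map y)))
            - (1 / C) * ∑ G' ∈ P, ∑ y : Fin N → Y, (∏ j, π (y j)) * (g (y i) * f (G'.val.map y))) := by
    calc (∑ y : Fin N → Y, (∏ i, π (y i)) *
        (∑ i : Fin N, g (y i) *
          (∑ G ∈ P.filter (fun G => i ∈ G),
            (f (G.val.map y) - (1 / C) * ∑ G' ∈ P, f (G'.val.map y)))))
        = ∑ y : Fin N → Y, ∑ i : Fin N, (∏ j, π (y j)) * (g (y i) *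
            (∑ G ∈ P.filter (fun G => i ∈ G),
              (f (G.val.map y) - (1 / C) * ∑ G' ∈ P, f (G'.val.map y)))) := by
          refine Finset.sum_congr rfl fun y _ => ?_
          rw [Finset.mul_sum]
      _ = ∑ i : Fin N, ∑ y : Fin N → Y, (∏ j, π (y j)) * (g (y i) *
            (∑ G ∈ P.filter (fun G => i ∈ G),
              (f (G.val.map y) - (1 / C) * ∑ G' ∈ P, f (G'.val.map y)))) := Finset.sum_comm
      _ = ∑ i : Fin N, ∑ y : Fin N → Y, ∑ G ∈ P.filter (fun G => i ∈ G),
            (∏ j, π (y j)) * (g (y i) *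
              (f (G.val.map y) - (1 / C) * ∑ G' ∈ P, f (G'.val.map y))) := by
          refine Finset.sum_congr rfl fun i _ => Finset.sum_congr rfl fun y _ => ?_
          rw [Finset.mul_sum, Finset.mul_sum]
      _ = ∑ i : Fin N, ∑ G ∈ P.filter (fun G => i ∈ G), ∑ y : Fin N → Y,
            (∏ j, π (y j)) * (g (y i) *
              (f (G.val.map y) - (1 / C) * ∑ G' ∈ P, f (G'.val.map y))) :=
          Finset.sum_congr rfl fun i _ => Finset.sum_comm
      _ = _ := Finset.sum_congr rfl fun i _ => Finset.sum_congr rfl fun G _ => hA i G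
  rw [hLHS]
  -- evaluate the inner sums
  have hcardfilt : ∀ i : Fin N, ((P.filter (fun G => i ∈ G)).card : ℝ) = c := by
    intro i
    rw [hP, card_filter_mem_powersetCard hn i, hc]
  have hPT : ∀ i : Fin N, ∑ G' ∈ P, ∑ y : Fin N → Y,
      (∏ j, π (y j)) * (g (y i) * f (G'.val.map y)) = c * T := by
    intro i
    rw [Finset.sum_congr rfl (hE i), ← Finset.sum_filter, Finset.sum_const, nsmul_eq_mul,
      hcardfilt i]
  have hEval : ∀ i : Fin N, ∑ G ∈ P.filter (fun G => i ∈ G),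
      ((∑ y : Fin N → Y, (∏ j, π (y j)) * (g (y i) * f (G.val.map y)))
        - (1 / C) * ∑ G' ∈ P, ∑ y : Fin N → Y, (∏ j, π (y j)) * (g (y i) * f (G'.val.map y)))
      = c * (T - (1 / C) * (c * T)) := by
    intro i
    have per : ∀ G ∈ P.filter (fun G => i ∈ G),
        ((∑ y : Fin N → Y, (∏ j, π (y j)) * (g (y i) * f (G.val.map y)))
          - (1 / C) * ∑ G' ∈ P, ∑ y : Fin N → Y, (∏ j, π (y j)) * (g (y i) * f (G'.val.map y)))
        = T - (1 / C) * (c * T) := by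
      intro G hG
      rw [Finset.mem_filter] at hG
      rw [hE i G hG.1, if_pos hG.2, hPT i]
    rw [Finset.sum_congr rfl per, Finset.sum_const, nsmul_eq_mul, hcardfilt i]
  rw [Finset.sum_congr rfl (fun i _ => hEval i), Finset.sum_const, nsmul_eq_mul,
    Finset.card_univ, Fintype.card_fin]
  -- the right-hand side
  have hRHS : ∑ z : Fin n → Y, (∏ j, π (z j)) *
      (f (Multiset.map z (Finset.univ : Finset (Fin n)).val) * ∑ j : Fin n, g (z j))
      = (n : ℝ) * T := by
    calc ∑ z : Fin n → Y, (∏ j, π (z j)) *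
        (f (Multiset.map z (Finset.univ : Finset (Fin n)).val) * ∑ j : Fin n, g (z j))
        = ∑ z : Fin n → Y, ∑ j : Fin n, (∏ j', π (z j')) *
            (f (Multiset.map z (Finset.univ : Finset (Fin n)).val) * g (z j)) := by
          refine Finset.sum_congr rfl fun z _ => ?_
          rw [Finset.mul_sum, Finset.mul_sum]
      _ = ∑ j : Fin n, ∑ z : Fin n → Y, (∏ j', π (z j')) *
            (f (Multiset.map z (Finset.univ : Finset (Fin n)).val) * g (z j)) := Finset.sum_comm
      _ = ∑ _j : Fin n, T := Finset.sum_congr rfl fun j _ => Tv_const π g f j ⟨0, hn⟩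
      _ = (n : ℝ) * T := by
          rw [Finset.sum_const, nsmul_eq_mul, Finset.card_univ, Fintype.card_fin]
  rw [hRHS]
  -- final algebra
  have hNc : (N : ℝ) * c = C * n := by
    have h1 : N * ((N - 1).choose (n - 1)) = N.choose n * n := by
      have h2 := Nat.add_one_mul_choose_eq (N - 1) (n - 1)
      have hN1 : N - 1 + 1 = N := by omega
      have hn1 : n - 1 + 1 = n := by omega
      simpa [Nat.succ_eq_add_one, hN1, hn1] using h2
    rw [hC, hc]
    exact_mod_cast h1
  have hC0 : C ≠ 0 := by
    rw [hC]
    exact_mod_cast (Nat.choose_pos (le_of_lt hN)).ne'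
  field_simp
  linear_combination (T * C - c * T) * hNc
end

section
/- Let Y₁,…,Y_n be i.i.d. from π, f symmetric, and g : Y → ℝ with E_π[g] = 0. Then E[f(Y₁,…,Y_n) · Σ_{i=1}^n g(Y_i)] = n · E_{y∼π}[g(y) · A_marg(y)], where A_marg(y) = E[f(y,Y₂,…,Y_n)] − E[f(Y₁,…,Y_n)]. -/
/-- The set-RL policy gradient equals n times the standard policy gradient with
the marginal set advantage A_marg(y) = E[f(y,Y₂,…,Y_n)] − E[f(Y₁,…,Y_n)]. -/
theorem stmt_16 {Y : Type*} [Fintype Y] (n : ℕ) (hn : 0 < n)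
    (π : Y → ℝ) (hπ0 : ∀ u, 0 ≤ π u) (hπ1 : ∑ u, π u = 1)
    (g : Y → ℝ) (hg : ∑ u, π u * g u = 0)
    (f : (Fin n → Y) → ℝ)
    (hsymm : ∀ (σ : Equiv.Perm (Fin n)) (v : Fin n → Y), f (v ∘ σ) = f v) :
    ∑ v : Fin n → Y, (∏ i, π (v i)) * (f v * ∑ i, g (v i))
      = (n : ℝ) * ∑ y : Y, π y * (g y *
          ((∑ v : Fin n → Y, (∏ i, π (v i)) * f (Function.update v ⟨0, hn⟩ y))
            - ∑ v : Fin n → Y, (∏ i, π (v i)) * f v)) := by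
  classical
  set z : Fin n := ⟨0, hn⟩ with hz
  set P : (Fin n → Y) → ℝ := fun v => ∏ i, π (v i) with hP
  -- Step 1: symmetry reduces each i to z
  have hsym : ∀ i : Fin n,
      (∑ v : Fin n → Y, P v * (f v * g (v i)))
        = ∑ v : Fin n → Y, P v * (f v * g (v z)) := by
    intro i
    have hbij : Function.Bijective (fun v : Fin n → Y => v ∘ Equiv.swap z i) := by
      constructor
      · intro a b hab
        funext j
        have := congrFun hab ((Equiv.swap z i).symm j)
        simpa using this
      · intro w
        exact ⟨w ∘ (Equiv.swap z i).symm, by funext j; simp⟩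
    refine (Fintype.sum_bijective _ hbij _ _ ?_).symm
    intro v
    have h1 : P (v ∘ Equiv.swap z i) = P v := by
      simp only [hP, Function.comp]
      exact Fintype.prod_equiv (Equiv.swap z i) _ _ (fun j => rfl)
    have h2 : f (v ∘ Equiv.swap z i) = f v := hsymm _ v
    have h3 : (v ∘ Equiv.swap z i) i = v z := by simp
    rw [h1, h2, h3]
  -- Step 2: LHS = n * ∑_v P v * (f v * g (v z))
  have hLHS : (∑ v : Fin n → Y, P v * (f v * ∑ i, g (v i)))
      = (n : ℝ) * ∑ v : Fin n → Y, P v * (f v * g (v z)) := by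
    have : ∀ v : Fin n → Y, P v * (f v * ∑ i, g (v i))
        = ∑ i, P v * (f v * g (v i)) := by
      intro v; rw [Finset.mul_sum, Finset.mul_sum]
    simp_rw [this]
    rw [Finset.sum_comm]
    simp_rw [hsym]
    simp [Finset.sum_const, nsmul_eq_mul]
  -- Step 3: ∑_y π y * (g y * T y) = ∑_v P v * (f v * g (v z)) via involution
  set T : Y → ℝ := fun y => ∑ v : Fin n → Y, P v * f (Function.update v z y) with hT
  have key : (∑ y : Y, π y * (g y * T y))
      = ∑ v : Fin n → Y, P v * (f v * g (v z)) := by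
    have hexp : (∑ y : Y, π y * (g y * T y))
        = ∑ p : Y × (Fin n → Y),
            π p.1 * g p.1 * P p.2 * f (Function.update p.2 z p.1) := by
      rw [Fintype.sum_prod_type]
      refine Finset.sum_congr rfl fun y _ => ?_
      simp only [hT, Finset.mul_sum]
      refine Finset.sum_congr rfl fun v _ => by ring
    rw [hexp]
    have hinv : Function.Involutive
        (fun p : Y × (Fin n → Y) => (p.2 z, Function.update p.2 z p.1)) := by
      intro p
      simp [Function.update_idem]
    have := Fintype.sum_bijective _ (Function.Involutive.toPerm _ hinv).bijective
      (fun p : Y × (Fin n → Y) => π p.1 * g p.1 * P p.2 * f (Function.update p.2 z p.1))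
      (fun p : Y × (Fin n → Y) => π p.1 * (g (p.2 z) * (P p.2 * f p.2))) ?_
    · rw [this, Fintype.sum_prod_type]
      have h2 : ∀ x : Y, (∑ v : Fin n → Y, π x * (g (v z) * (P v * f v)))
          = π x * ∑ v : Fin n → Y, P v * (f v * g (v z)) := by
        intro x
        rw [Finset.mul_sum]
        exact Finset.sum_congr rfl fun v _ => by ring
      rw [Finset.sum_congr rfl fun x _ => h2 x, ← Finset.sum_mul, hπ1, one_mul]
    · intro p
      obtain ⟨y, v⟩ := p
      show π y * g y * P v * f (Function.update v z y)
        = π (v z) * (g (Function.update v z y z) * (P (Function.update v z y) * f (Function.update v z y)))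
      have hup : Function.update v z y z = y := by simp
      have hprod : π y * P v = π (v z) * P (Function.update v z y) := by
        simp only [hP]
        rw [← Finset.mul_prod_erase Finset.univ (fun i => π (v i)) (Finset.mem_univ z),
            ← Finset.mul_prod_erase Finset.univ (fun i => π (Function.update v z y i)) (Finset.mem_univ z)]
        have : ∏ i ∈ Finset.univ.erase z, π (Function.update v z y i)
            = ∏ i ∈ Finset.univ.erase z, π (v i) := by
          refine Finset.prod_congr rfl fun i hi => ?_
          rw [Function.update_of_ne (Finset.ne_of_mem_erase hi)]
        rw [this]
        simp [Function.update_self]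
        ring
      rw [hup]
      calc π y * g y * P v * f (Function.update v z y)
          = (π y * P v) * (g y * f (Function.update v z y)) := by ring
        _ = (π (v z) * P (Function.update v z y)) * (g y * f (Function.update v z y)) := by rw [hprod]
        _ = _ := by ring
  -- Step 4: baseline vanishes
  have hbase : (∑ y : Y, π y * (g y * (T y - ∑ v : Fin n → Y, P v * f v)))
      = ∑ y : Y, π y * (g y * T y) := by
    set E := ∑ v : Fin n → Y, P v * f v
    have : ∀ y, π y * (g y * (T y - E)) = π y * (g y * T y) - (π y * g y) * E := by
      intro y; ring
    simp_rw [this, Finset.sum_sub_distrib, ← Finset.sum_mul, hg]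
    ring
  calc ∑ v : Fin n → Y, P v * (f v * ∑ i, g (v i))
      = (n : ℝ) * ∑ v : Fin n → Y, P v * (f v * g (v z)) := hLHS
    _ = (n : ℝ) * ∑ y : Y, π y * (g y * T y) := by rw [key]
    _ = _ := by rw [← hbase]
end
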